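/- In a regular n-gon with n = 2m−1 odd (m ≥ 3) inscribed in a circle, no vertex lies strictly between the line containing a longest diagonal and the diameter of the circumcircle parallel to that diagonal. -/

import Mathlib

section AuxLemmas
open Real

/-- For odd `q`, `|sin (π q / (2n))| ≥ sin (π/(2n))`. -/
lemma sin_bound (n : ℕ) (hn : 1 ≤ n) (q : ℤ) (hq : Odd q) :
    Real.sin (π / (2 * n)) ≤ |Real.sin (π * q / (2 * n))| := by
  have hnR : (0:ℝ) < (n:ℝ) := by exact_mod_cast hn
  have h2n : (0:ℝ) < 2 * (n:ℝ) := by linarith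
  set r : ℤ := q % (2 * n) with hr
  have h2n' : (0:ℤ) < 2 * n := by exact_mod_cast h2n
  have hr0 : 0 ≤ r := Int.emod_nonneg q (by omega)
  have hrlt : r < 2 * n := Int.emod_lt_of_pos q h2n'
  have hqr : q = 2 * n * (q / (2 * n)) + r := (Int.mul_ediv_add_emod q (2*n)).symm
  have hrodd : Odd r := by
    have h2 : (2:ℤ) ∣ 2 * n := ⟨n, rfl⟩
    have := Int.emod_emod_of_dvd q h2
    rw [Int.odd_iff] at hq ⊢
    rw [hr, this, hq]
  have hr1 : 1 ≤ r := by rcases hrodd with ⟨a, ha⟩; omega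
  set t : ℤ := q / (2 * n) with ht
  have key : π * q / (2 * n) = π * r / (2 * n) + t * π := by
    have hq' : (q : ℝ) = 2 * n * t + r := by exact_mod_cast hqr
    field_simp [hq']; linarith [hq']
  have habs : |((-1):ℝ) ^ t| = 1 := by
    rcases Int.even_or_odd t with h | h
    · rw [h.neg_one_zpow, abs_one]
    · rw [h.neg_one_zpow, abs_neg, abs_one]
  rw [key, Real.sin_add_int_mul_pi, abs_mul, habs, one_mul]
  have hrle : (r:ℝ) ≤ 2 * n := by exact_mod_cast hrlt.le
  have hr1R : (1:ℝ) ≤ (r:ℝ) := by exact_mod_cast hr1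
  have hmem1 : 0 ≤ π * r / (2*n) := by positivity
  have hmem2 : π * r / (2*n) ≤ π := by
    rw [div_le_iff₀ h2n]; nlinarith [Real.pi_pos]
  rw [abs_of_nonneg (Real.sin_nonneg_of_nonneg_of_le_pi hmem1 hmem2)]
  have base : ∀ x : ℝ, π/(2*n) ≤ x → x ≤ π/2 → Real.sin (π/(2*n)) ≤ Real.sin x := by
    intro x h1 h2
    refine Real.strictMonoOn_sin.monotoneOn ⟨?_, ?_⟩ ⟨?_, ?_⟩ h1
    · have : 0 ≤ π/(2*n) := by positivity
      linarith [Real.pi_pos]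
    · have hn1R : (1:ℝ) ≤ (n:ℝ) := by exact_mod_cast hn
      rw [div_le_div_iff₀ h2n two_pos]; nlinarith [Real.pi_pos]
    · have : 0 ≤ π/(2*n) := by positivity
      linarith [Real.pi_pos]
    · exact h2
  rcases le_or_gt r n with hrn | hrn
  · apply base
    · rw [div_le_div_iff₀ h2n h2n]
      nlinarith [Real.pi_pos, mul_pos Real.pi_pos h2n]
    · have : (r:ℝ) ≤ n := by exact_mod_cast hrn
      rw [div_le_div_iff₀ h2n two_pos]; nlinarith [Real.pi_pos]
  · have hub : (r:ℝ) ≤ 2*(n:ℝ) - 1 := by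
      have h : r ≤ 2*(n:ℤ) - 1 := by omega
      exact_mod_cast h
    have hlb : (n:ℝ) ≤ (r:ℝ) := by exact_mod_cast hrn.le
    have hrw : π * (r:ℝ) / (2*n) = π - π * (2*(n:ℝ) - r)/(2*n) := by
      field_simp; ring
    rw [hrw, Real.sin_pi_sub]
    apply base
    · rw [div_le_div_iff₀ h2n h2n]
      nlinarith [Real.pi_pos, mul_pos Real.pi_pos h2n]
    · rw [div_le_div_iff₀ h2n two_pos]
      nlinarith [Real.pi_pos, mul_pos Real.pi_pos hnR]

/-- For odd `n` and any integer `s`, `|cos (π s / n)| ≥ sin (π/(2n))`. -/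
lemma cos_bound (n : ℕ) (hodd : Odd n) (hn : 1 ≤ n) (s : ℤ) :
    Real.sin (π / (2 * n)) ≤ |Real.cos (π * s / n)| := by
  have hnR : (0:ℝ) < n := by exact_mod_cast hn
  set q : ℤ := (n:ℤ) - 2*s with hqdef
  have hq : (q:ℝ) = (n:ℝ) - 2*(s:ℝ) := by rw [hqdef]; push_cast; ring
  have key : π * s / n = π / 2 - π * (q:ℝ) / (2 * n) := by
    rw [hq]
    rw [div_sub_div _ _ (two_ne_zero) (by positivity : (2:ℝ)*(n:ℝ) ≠ 0),
      div_eq_div_iff (by positivity) (by positivity)]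
    ring
  rw [key, Real.cos_pi_div_two_sub]
  refine sin_bound n hn q ?_
  rcases hodd with ⟨a, ha⟩
  have ha' : (n:ℤ) = 2*a + 1 := by exact_mod_cast ha
  exact ⟨a - s, by omega⟩

lemma strip_abs {C A Y Z : ℝ} (hA : 0 < A)
    (h1 : min C (C + A*Z) < C + A*Y) (h2 : C + A*Y < max C (C + A*Z)) :
    |Y| < |Z| := by
  have hZle : Z ≤ |Z| := le_abs_self Z
  have hZge : -|Z| ≤ Z := neg_abs_le Z
  have hmax : max C (C + A*Z) ≤ C + A*|Z| :=
    max_le (by nlinarith [abs_nonneg Z]) (by nlinarith)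
  have hmin : C - A*|Z| ≤ min C (C + A*Z) :=
    le_min (by nlinarith [abs_nonneg Z]) (by nlinarith)
  have hub : Y < |Z| := by nlinarith [lt_of_lt_of_le h2 hmax]
  have hlb : -|Z| < Y := by nlinarith [lt_of_le_of_lt hmin h1]
  rw [abs_lt]; exact ⟨hlb, hub⟩

end AuxLemmas


noncomputable section
open scoped RealInnerProductSpace
open Real

/-- `d`-dimensional Euclidean space. -/
abbrev Euc (d : ℕ) := EuclideanSpace ℝ (Fin d)

/-- In a regular `n`-gon with `n = 2m - 1` odd (`m ≥ 3`) inscribed in a circle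
of radius `R > 0` about the centre `c`, no vertex lies strictly between the
line containing a longest diagonal (from vertex `j` to vertex `j + m - 1` or
`j + m`) and the diameter of the circumcircle parallel to that diagonal.  The
open strip between the two parallel lines is described via any nonzero linear
functional `⟪w, ·⟫` constant on the diagonal: a point lies strictly between
the two lines iff its value lies strictly between the value on the diagonal
and the value at the centre. -/
theorem no_vertex_strictly_between_longest_diagonal_and_diameter
    (m : ℕ) (hm : 3 ≤ m) (c : Euc 2) (R : ℝ) (hR : 0 < R) (θ : ℝ)
    (v : ℕ → Euc 2)
    (hv : ∀ k : ℕ,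
      v k 0 = c 0 + R * Real.cos (θ + 2 * Real.pi * k / (2 * (m : ℝ) - 1)) ∧
      v k 1 = c 1 + R * Real.sin (θ + 2 * Real.pi * k / (2 * (m : ℝ) - 1)))
    (j e : ℕ) (he : e = j + m - 1 ∨ e = j + m)
    (w : Euc 2) (hw : w ≠ 0) (hpar : ⟪w, v j⟫ = ⟪w, v e⟫)
    (k : ℕ) :
    ¬ (min ⟪w, c⟫ ⟪w, v j⟫ < ⟪w, v k⟫ ∧
        ⟪w, v k⟫ < max ⟪w, c⟫ ⟪w, v j⟫) := by
  rintro ⟨h1, h2⟩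
  have hπ := Real.pi_pos
  set N : ℝ := 2 * (m:ℝ) - 1 with hN
  have hmR : (3:ℝ) ≤ (m:ℝ) := by exact_mod_cast hm
  have hN0 : 0 < N := by rw [hN]; linarith
  have h2N : (0:ℝ) < 2 * N := by linarith
  -- inner product in coordinates
  have hinner : ∀ x : Euc 2, ⟪w, x⟫ = w 0 * x 0 + w 1 * x 1 := by
    intro x
    simp [PiLp.inner_apply, RCLike.inner_apply, conj_trivial, Fin.sum_univ_two]; ring
  -- polar decomposition of w
  set z : ℂ := ⟨w 0, w 1⟩ with hz
  have hz0 : z ≠ 0 := by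
    intro h
    apply hw
    have h0 : w 0 = 0 := by simpa using congrArg Complex.re h
    have h1' : w 1 = 0 := by simpa using congrArg Complex.im h
    ext i
    fin_cases i <;> simp [h0, h1']
  set r : ℝ := ‖z‖ with hr
  have hr0 : 0 < r := by rw [hr]; exact norm_pos_iff.mpr hz0
  set φ : ℝ := z.arg with hφ
  have hw0 : w 0 = r * Real.cos φ := by
    rw [hφ, Complex.cos_arg hz0, ← hr, mul_comm, div_mul_cancel₀ _ (ne_of_gt hr0)]
  have hw1 : w 1 = r * Real.sin φ := by
    rw [hφ, Complex.sin_arg, ← hr, mul_comm, div_mul_cancel₀ _ (ne_of_gt hr0)]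
  have hvk : ∀ k' : ℕ, ⟪w, v k'⟫ = ⟪w, c⟫ + R * r * Real.cos (θ + 2 * π * k' / N - φ) := by
    intro k'
    obtain ⟨hk0, hk1⟩ := hv k'
    rw [hinner, hinner, hk0, hk1, hw0, hw1, Real.cos_sub]
    ring
  have hRr : 0 < R * r := mul_pos hR hr0
  -- the diagonal offset d
  obtain ⟨d, hde, hd0, hdN, hdcos⟩ :
      ∃ d : ℝ, (e:ℝ) = (j:ℝ) + d ∧ 0 < d ∧ d < N ∧
        |Real.cos (π * d / N)| ≤ Real.sin (π / (2 * N)) := by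
    have hsin_nonneg : 0 ≤ Real.sin (π / (2 * N)) := by
      apply Real.sin_nonneg_of_nonneg_of_le_pi (by positivity)
      rw [div_le_iff₀ h2N]
      nlinarith
    rcases he with h | h
    · refine ⟨(m:ℝ) - 1, ?_, by linarith, by rw [hN]; linarith, ?_⟩
      · subst h
        push_cast [Nat.cast_sub (by omega : 1 ≤ j + m)]
        ring
      · have harg : π * ((m:ℝ) - 1) / N = π/2 - π/(2*N) := by
          have hm' : (m:ℝ) - 1 = (N - 1) / 2 := by rw [hN]; ring
          rw [hm', div_sub_div _ _ two_ne_zero (ne_of_gt h2N),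
            div_eq_div_iff (ne_of_gt hN0) (ne_of_gt (by linarith : (0:ℝ) < 2 * (2*N)))]
          ring
        rw [harg, Real.cos_pi_div_two_sub, abs_of_nonneg hsin_nonneg]
    · refine ⟨(m:ℝ), ?_, by linarith, by rw [hN]; linarith, ?_⟩
      · subst h; push_cast; ring
      · have harg : π * (m:ℝ) / N = π/2 - (-(π/(2*N))) := by
          have hm' : (m:ℝ) = (N + 1) / 2 := by rw [hN]; ring
          rw [hm', sub_neg_eq_add, div_add_div _ _ two_ne_zero (ne_of_gt h2N),
            div_eq_div_iff (ne_of_gt hN0) (ne_of_gt (by linarith : (0:ℝ) < 2 * (2*N)))]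
          ring
        rw [harg, Real.cos_pi_div_two_sub, Real.sin_neg, abs_neg,
          abs_of_nonneg hsin_nonneg]
  -- cos equality from hpar
  have hcc : Real.cos (θ + 2*π*j/N - φ) = Real.cos (θ + 2*π*e/N - φ) := by
    have h := hpar
    rw [hvk j, hvk e] at h
    exact mul_left_cancel₀ (ne_of_gt hRr) (add_left_cancel h)
  rw [Real.cos_eq_cos_iff] at hcc
  obtain ⟨t, ht | ht⟩ := hcc
  · -- impossible branch
    have hd' : 2*π*d/N = 2*(t:ℝ)*π := by
      have hej : (e:ℝ) - j = d := by linarith [hde]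
      calc 2*π*d/N = 2*π*(e:ℝ)/N - 2*π*(j:ℝ)/N := by rw [← hej]; ring
        _ = 2*(t:ℝ)*π := by linarith [ht]
    have h0t : (0:ℝ) < t := by
      have hpos : 0 < 2*π*d/N := by positivity
      nlinarith
    have h1t : (t:ℝ) < 1 := by
      have hlt : 2*π*d/N < 2*π := by
        rw [div_lt_iff₀ hN0]; nlinarith
      nlinarith
    have ht0 : (0:ℤ) < t := by exact_mod_cast h0t
    have ht1 : t < 1 := by exact_mod_cast h1t
    omega
  · -- main branch
    have habs1 : |((-1):ℝ)^t| = 1 := by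
      rcases Int.even_or_odd t with h | h
      · rw [h.neg_one_zpow, abs_one]
      · rw [h.neg_one_zpow, abs_neg, abs_one]
    have hφ' : φ = θ + π*(e:ℝ)/N + π*(j:ℝ)/N - t*π := by
      have e1 : 2*π*(e:ℝ)/N = 2*(π*(e:ℝ)/N) := by ring
      have e2 : 2*π*(j:ℝ)/N = 2*(π*(j:ℝ)/N) := by ring
      linarith [ht, e1, e2]
    have hcos : ∀ k' : ℕ, Real.cos (θ + 2*π*k'/N - φ)
        = (-1)^t * Real.cos (π * (2*(k':ℝ) - j - e) / N) := by
      intro k'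
      have harg : θ + 2*π*k'/N - φ = π * (2*(k':ℝ) - j - e) / N + t * π := by
        rw [hφ']; ring
      rw [harg, Real.cos_add_int_mul_pi]
    -- the strip condition gives |Y| < |Z|
    rw [hvk j, hvk k] at h1 h2
    have habsY : |Real.cos (θ + 2*π*(k:ℝ)/N - φ)| < |Real.cos (θ + 2*π*(j:ℝ)/N - φ)| :=
      strip_abs hRr h1 h2
    have hZabs : |Real.cos (θ + 2*π*(j:ℝ)/N - φ)| ≤ Real.sin (π/(2*N)) := by
      have hZ : Real.cos (θ + 2*π*(j:ℝ)/N - φ) = (-1)^t * Real.cos (π * d / N) := by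
        rw [hcos j]
        congr 1
        have h' : π * (2*(j:ℝ) - j - e)/N = -(π * d / N) := by rw [hde]; ring
        rw [h', Real.cos_neg]
      rw [hZ, abs_mul, habs1, one_mul]
      exact hdcos
    have hYabs : Real.sin (π/(2*N)) ≤ |Real.cos (θ + 2*π*(k:ℝ)/N - φ)| := by
      have hodd : Odd (2*m - 1) := ⟨m - 1, by omega⟩
      have hn1 : 1 ≤ 2*m - 1 := by omega
      have hnN : ((2*m - 1 : ℕ):ℝ) = N := by
        rw [hN]; push_cast [Nat.cast_sub (by omega : 1 ≤ 2*m)]; ring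
      have hs : (((2*(k:ℤ) - j - e) : ℤ):ℝ) = 2*(k:ℝ) - j - e := by push_cast; ring
      have hb := cos_bound (2*m - 1) hodd hn1 (2*(k:ℤ) - (j:ℤ) - (e:ℤ))
      rw [hnN, hs] at hb
      rw [hcos k, abs_mul, habs1, one_mul]
      exact hb
    linarith [habsY, hZabs, hYabs]
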